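/- arXiv:1810.06087 — 2 statements merged into one kernel-verified Lean document; each statement's English description precedes it below -/
import Mathlib

section
/- For every α > 0 and every discrete-time Markov transition kernel g on a metric state space X with stationary distribution π, one has 0.1 · τ_g(α) ≤ t_H(α) ≤ 2 · τ_g(α); moreover τ_g(α) is infinite if and only if t_H(α) is infinite. -/
open MeasureTheory ENNReal

noncomputable section

namespace MixHit

variable {X : Type*} [MeasurableSpace X]

/-- Total variation distance between two Borel measures. -/
def tv (μ ν : Measure X) : ℝ≥0∞ :=
  ⨆ (A : Set X) (_ : MeasurableSet A), (μ A - ν A) ⊔ (ν A - μ A)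

/-- `g` is a Markov transition kernel: each `g x` is a (Borel) probability measure,
measurably in `x`. -/
def IsMarkov (g : X → Measure X) : Prop :=
  (∀ x, IsProbabilityMeasure (g x)) ∧
    ∀ A : Set X, MeasurableSet A → Measurable fun x => g x A

/-- `t`-step transition probabilities (`iterK g 0 x = δ_x`). -/
def iterK (g : X → Measure X) : ℕ → X → Measure X
  | 0 => fun x => Measure.dirac x
  | n + 1 => fun x => (g x).bind (iterK g n)

/-- `π` is a stationary distribution for `g`. -/
def Stationary (g : X → Measure X) (π : Measure X) : Prop :=
  ∀ A : Set X, MeasurableSet A → ∫⁻ x, g x A ∂π = π A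

/-- `g` is reversible with respect to `π`. -/
def Reversible (g : X → Measure X) (π : Measure X) : Prop :=
  ∀ A B : Set X, MeasurableSet A → MeasurableSet B →
    ∫⁻ x in A, g x B ∂π = ∫⁻ x in B, g x A ∂π

/-- The lazy kernel `g_L(x,·) = (1/2) g(x,·) + (1/2) δ_x`. -/
def lazy (g : X → Measure X) : X → Measure X := fun x =>
  (2 : ℝ≥0∞)⁻¹ • g x + (2 : ℝ≥0∞)⁻¹ • Measure.dirac x

/-- Mixing time `min {t : sup_x ‖g^t(x,·) − π‖ ≤ ε}`, as an element of `ℝ≥0∞`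
(`⊤` if there is no such `t`). -/
def mixTime (g : X → Measure X) (π : Measure X) (ε : ℝ≥0∞) : ℝ≥0∞ :=
  ⨅ (t : ℕ) (_ : ∀ x, tv (iterK g t x) π ≤ ε), (t : ℝ≥0∞)

/-- `d̄(t) = sup_{x,y} ‖g^t(x,·) − g^t(y,·)‖`. -/
def dbar (g : X → Measure X) (t : ℕ) : ℝ≥0∞ :=
  ⨆ (x : X) (y : X), tv (iterK g t x) (iterK g t y)

/-- Standardized mixing time `min {t : d̄(t) ≤ ε}` (`⊤` if there is no such `t`). -/
def stdMix (g : X → Measure X) (ε : ℝ≥0∞) : ℝ≥0∞ :=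
  ⨅ (t : ℕ) (_ : dbar g t ≤ ε), (t : ℝ≥0∞)

/-- `P_x(τ_A = t)` for the chain with kernel `g` started at `x`, where
`τ_A = min {t : X_t ∈ A}` (first-step recursion). -/
def hitEq (g : X → Measure X) (A : Set X) : ℕ → X → ℝ≥0∞
  | 0 => fun x => A.indicator (fun _ => 1) x
  | n + 1 => fun x => Aᶜ.indicator (fun x' => ∫⁻ y, hitEq g A n y ∂(g x')) x

/-- `P_x(τ_A ≤ t)`. -/
def hitLE (g : X → Measure X) (A : Set X) (t : ℕ) (x : X) : ℝ≥0∞ :=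
  ∑ s ∈ Finset.range (t + 1), hitEq g A s x

/-- `E_x[τ_A] = ∑_{t ≥ 0} P_x(τ_A > t)`. -/
def expHit (g : X → Measure X) (A : Set X) (x : X) : ℝ≥0∞ :=
  ∑' t : ℕ, (1 - hitLE g A t x)

/-- Maximum hitting time `t_H(α) = sup {E_x[τ_A] : x ∈ X, A Borel, π(A) ≥ α}`. -/
def maxHit (g : X → Measure X) (π : Measure X) (α : ℝ) : ℝ≥0∞ :=
  ⨆ (x : X) (A : Set X) (_ : MeasurableSet A) (_ : ENNReal.ofReal α ≤ π A),
    expHit g A x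

/-- Large hitting time
`τ_g(α) = min {t : inf {P_x(τ_A ≤ t) : x ∈ X, A Borel, π(A) ≥ α} > 0.9}`. -/
def largeHit (g : X → Measure X) (π : Measure X) (α : ℝ) : ℝ≥0∞ :=
  ⨅ (t : ℕ) (_ : (9 / 10 : ℝ≥0∞) <
      ⨅ (x : X) (A : Set X) (_ : MeasurableSet A) (_ : ENNReal.ofReal α ≤ π A),
        hitLE g A t x),
    (t : ℝ≥0∞)

/-- The strong Feller property: continuity of `x ↦ g(x,·)` in total variation. -/
def StrongFeller [PseudoMetricSpace X] (g : X → Measure X) : Prop :=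
  ∀ x : X, ∀ ε : ℝ, 0 < ε → ∃ δ : ℝ, 0 < δ ∧
    ∀ y : X, dist y x < δ → tv (g x) (g y) < ENNReal.ofReal ε

/-- Law of `X_t` on the event that `t` is the first time the chain lies in `S`. -/
def enterDist (g : X → Measure X) (S : Set X) : ℕ → X → Measure X
  | 0 => fun x => (Measure.dirac x).restrict S
  | n + 1 => fun x => Sᶜ.indicator (fun x' => (g x').bind (enterDist g S n)) x

/-- Law of the chain's position at its first entrance (at a time `≥ 0`) into `S`. -/
def hitMeasure (g : X → Measure X) (S : Set X) (x : X) : Measure X :=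
  Measure.sum fun t => enterDist g S t x

/-- One step of the trace of `g` on `S`: take one `g`-step, then run until the
first entrance into `S`. -/
def traceK (g : X → Measure X) (S : Set X) : X → Measure X :=
  fun x => (g x).bind (hitMeasure g S)

/-- The trace of `g` on `S`, viewed as a kernel on the subtype `S`. -/
def traceSub (g : X → Measure X) (S : Set X) : S → Measure S :=
  fun x => (traceK g S (x : X)).comap (Subtype.val)

/-- Normalization of `π` to `S`, as a measure on the subtype `S`. -/
def normSub (π : Measure X) (S : Set X) : Measure S :=
  (π S)⁻¹ • π.comap (Subtype.val : S → X)

/-- Ergodicity: from every starting point, the chain converges to `π`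
in total variation. -/
def ErgodicK (g : X → Measure X) (π : Measure X) : Prop :=
  Stationary g π ∧
    ∀ x : X, Filter.Tendsto (fun t => tv (iterK g t x) π) Filter.atTop (nhds 0)



section Aux
open NNReal

lemma nn1 : (9/10:ℝ≥0∞) + 1/10 = 1 := by
  have : ((9/10:ℝ≥0):ℝ≥0∞) + ((1/10:ℝ≥0):ℝ≥0∞) = ((1:ℝ≥0):ℝ≥0∞) := by
    rw [← ENNReal.coe_add]
    congr 1
    rw [← NNReal.coe_inj]; push_cast; norm_num
  simpa [ENNReal.coe_div] using this

lemma nn2 : (1:ℝ≥0∞) - 1/10 = 9/10 :=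
  ENNReal.sub_eq_of_eq_add (by norm_num) nn1.symm

lemma nn3 : (9/10:ℝ≥0∞)⁻¹ * (11/10) ≤ 2 := by
  have h : ((9/10:ℝ≥0)⁻¹ * (11/10:ℝ≥0) : ℝ≥0) ≤ ((2:ℝ≥0)) := by
    rw [← NNReal.coe_le_coe]; push_cast; norm_num
  calc (9/10:ℝ≥0∞)⁻¹ * (11/10) = (((9/10:ℝ≥0)⁻¹ * (11/10:ℝ≥0) : ℝ≥0) : ℝ≥0∞) := by
        push_cast [ENNReal.coe_inv (by norm_num : (9/10:ℝ≥0) ≠ 0), ENNReal.coe_div]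
        norm_num
    _ ≤ 2 := by exact_mod_cast h

lemma nn4 : (1:ℝ≥0∞) + 1/10 = 11/10 := by
  have : ((1:ℝ≥0):ℝ≥0∞) + ((1/10:ℝ≥0):ℝ≥0∞) = ((11/10:ℝ≥0):ℝ≥0∞) := by
    rw [← ENNReal.coe_add]
    congr 1
    rw [← NNReal.coe_inj]; push_cast; norm_num
  simpa [ENNReal.coe_div] using this

lemma measurable_of_isMarkov {g : X → Measure X} (hg : IsMarkov g) : Measurable g :=
  Measure.measurable_of_measurable_coe g (fun A hA => hg.2 A hA)

lemma measurable_hitEq {g : X → Measure X} (hg : IsMarkov g) {A : Set X}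
    (hA : MeasurableSet A) : ∀ n, Measurable (hitEq g A n)
  | 0 => measurable_const.indicator hA
  | (n+1) =>
    ((Measure.measurable_lintegral (measurable_hitEq hg hA n)).comp
      (measurable_of_isMarkov hg)).indicator hA.compl

lemma measurable_hitLE {g : X → Measure X} (hg : IsMarkov g) {A : Set X}
    (hA : MeasurableSet A) (t : ℕ) : Measurable (hitLE g A t) :=
  Finset.measurable_sum _ (fun s _ => measurable_hitEq hg hA s)

lemma hitLE_zero {g : X → Measure X} {A : Set X} (x : X) :
    hitLE g A 0 x = A.indicator (fun _ => 1) x := by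
  simp [hitLE, hitEq]

lemma hitLE_succ {g : X → Measure X} (hg : IsMarkov g) {A : Set X} (hA : MeasurableSet A)
    (n : ℕ) (x : X) :
    hitLE g A (n+1) x =
      A.indicator (fun _ => 1) x + Aᶜ.indicator (fun x' => ∫⁻ y, hitLE g A n y ∂(g x')) x := by
  unfold hitLE
  rw [Finset.sum_range_succ', add_comm]
  congr 1
  by_cases hx : x ∈ A
  · have hx' : x ∉ Aᶜ := by simpa using hx
    simp [hitEq, Set.indicator_of_notMem hx']
  · have hx' : x ∈ Aᶜ := hx
    simp only [hitEq, Set.indicator_of_mem hx']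
    rw [← lintegral_finset_sum _ (fun s _ => measurable_hitEq hg hA s)]

lemma hitLE_le_one {g : X → Measure X} (hg : IsMarkov g) {A : Set X} (hA : MeasurableSet A) :
    ∀ n x, hitLE g A n x ≤ 1 := by
  intro n
  induction n with
  | zero => intro x; rw [hitLE_zero]; exact Set.indicator_le_self' (by simp) x |>.trans (by simp)
  | succ n ih =>
    intro x
    rw [hitLE_succ hg hA]
    by_cases hx : x ∈ A
    · have hx' : x ∉ Aᶜ := by simpa using hx
      simp [Set.indicator_of_mem hx, Set.indicator_of_notMem hx']
    · have hx' : x ∈ Aᶜ := hx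
      have : (∫⁻ y, hitLE g A n y ∂(g x)) ≤ 1 := by
        have := hg.1 x
        calc (∫⁻ y, hitLE g A n y ∂(g x)) ≤ ∫⁻ _, 1 ∂(g x) := lintegral_mono (ih ·)
        _ = 1 := by simp
      simp [Set.indicator_of_notMem hx, Set.indicator_of_mem hx', this]

lemma hitLE_mono {g : X → Measure X} {A : Set X} (x : X) :
    Monotone (fun t => hitLE g A t x) := by
  apply monotone_nat_of_le_succ
  intro n
  show hitLE g A n x ≤ hitLE g A (n+1) x
  exact Finset.sum_le_sum_of_subset (Finset.range_subset_range.2 (by omega))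

lemma surv_succ {g : X → Measure X} (hg : IsMarkov g) {A : Set X} (hA : MeasurableSet A)
    (n : ℕ) (x : X) :
    1 - hitLE g A (n+1) x
      = Aᶜ.indicator (fun x' => ∫⁻ y, (1 - hitLE g A n y) ∂(g x')) x := by
  rw [hitLE_succ hg hA]
  by_cases hx : x ∈ A
  · have hx' : x ∉ Aᶜ := by simpa using hx
    simp [Set.indicator_of_mem hx, Set.indicator_of_notMem hx']
  · have hx' : x ∈ Aᶜ := hx
    have hp := hg.1 x
    have hfin : (∫⁻ y, hitLE g A n y ∂(g x)) ≠ ⊤ := by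
      refine ne_top_of_le_ne_top (by simp : (1:ℝ≥0∞) ≠ ⊤) ?_
      calc (∫⁻ y, hitLE g A n y ∂(g x)) ≤ ∫⁻ _, 1 ∂(g x) :=
        lintegral_mono (hitLE_le_one hg hA n ·)
      _ = 1 := by simp
    rw [Set.indicator_of_notMem (by simpa using hx' : x ∉ A),
      Set.indicator_of_mem hx', Set.indicator_of_mem hx', zero_add,
      lintegral_sub (measurable_hitLE hg hA n) hfin
        (Filter.Eventually.of_forall (hitLE_le_one hg hA n))]
    simp

lemma surv_step {g : X → Measure X} (hg : IsMarkov g) {A : Set X} (hA : MeasurableSet A)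
    (t : ℕ) : ∀ a x, 1 - hitLE g A (a + t + 1) x
      ≤ (⨆ y, 1 - hitLE g A t y) * (1 - hitLE g A a x) := by
  intro a
  set c := ⨆ y, 1 - hitLE g A t y with hc
  induction a with
  | zero =>
    intro x
    rw [zero_add, surv_succ hg hA]
    by_cases hx : x ∈ Aᶜ
    · rw [Set.indicator_of_mem hx]
      have h0 : hitLE g A 0 x = 0 := by
        rw [hitLE_zero, Set.indicator_of_notMem (by simpa using hx)]
      rw [h0, tsub_zero, mul_one]
      calc (∫⁻ y, (1 - hitLE g A t y) ∂(g x)) ≤ ∫⁻ _, c ∂(g x) :=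
        lintegral_mono (fun y => le_iSup (fun y => 1 - hitLE g A t y) y)
      _ = c := by simp [(hg.1 x).measure_univ]
    · rw [Set.indicator_of_notMem hx]
      exact zero_le
  | succ a ih =>
    intro x
    have harith : a + 1 + t + 1 = (a + t + 1) + 1 := by omega
    rw [harith, surv_succ hg hA]
    by_cases hx : x ∈ Aᶜ
    · rw [Set.indicator_of_mem hx]
      calc (∫⁻ y, (1 - hitLE g A (a + t + 1) y) ∂(g x))
          ≤ ∫⁻ y, c * (1 - hitLE g A a y) ∂(g x) := lintegral_mono ih
        _ = c * ∫⁻ y, (1 - hitLE g A a y) ∂(g x) := by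
            rw [lintegral_const_mul c (f := fun y => 1 - hitLE g A a y) (measurable_const.sub (measurable_hitLE hg hA a))]
        _ = c * (1 - hitLE g A (a+1) x) := by
            rw [surv_succ hg hA, Set.indicator_of_mem hx]
    · rw [Set.indicator_of_notMem hx]
      exact zero_le

lemma surv_geom {g : X → Measure X} (hg : IsMarkov g) {A : Set X} (hA : MeasurableSet A)
    (t : ℕ) : ∀ k j x, 1 - hitLE g A (k * (t+1) + j) x
      ≤ (⨆ y, 1 - hitLE g A t y) ^ k * (1 - hitLE g A j x) := by
  intro k
  induction k with
  | zero => intro j x; simp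
  | succ k ih =>
    intro j x
    have harith : (k+1) * (t+1) + j = (k * (t+1) + j) + t + 1 := by ring
    rw [harith]
    calc 1 - hitLE g A ((k * (t+1) + j) + t + 1) x
        ≤ (⨆ y, 1 - hitLE g A t y) * (1 - hitLE g A (k * (t+1) + j) x) :=
          surv_step hg hA t _ x
      _ ≤ (⨆ y, 1 - hitLE g A t y) * ((⨆ y, 1 - hitLE g A t y) ^ k * (1 - hitLE g A j x)) := by
          gcongr
          exact ih j x
      _ = (⨆ y, 1 - hitLE g A t y) ^ (k+1) * (1 - hitLE g A j x) := by ring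

lemma exp_ge {g : X → Measure X} {A : Set X} (t : ℕ) (x : X) :
    ((t:ℝ≥0∞) + 1) * (1 - hitLE g A t x) ≤ expHit g A x := by
  have h1 : ∑ s ∈ Finset.range (t+1), (1 - hitLE g A s x) ≤ expHit g A x :=
    ENNReal.sum_le_tsum _
  refine le_trans ?_ h1
  have h2 : ∀ s ∈ Finset.range (t+1), (1 - hitLE g A t x) ≤ (1 - hitLE g A s x) := by
    intro s hs
    have hst : s ≤ t := Nat.lt_succ_iff.mp (Finset.mem_range.mp hs)
    exact tsub_le_tsub_left (hitLE_mono x hst) 1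
  have h3 : ((t:ℝ≥0∞) + 1) * (1 - hitLE g A t x)
      = ∑ _s ∈ Finset.range (t+1), (1 - hitLE g A t x) := by
    rw [Finset.sum_const, Finset.card_range, nsmul_eq_mul]
    push_cast
    ring
  rw [h3]
  exact Finset.sum_le_sum h2

lemma expHit_le {g : X → Measure X} (hg : IsMarkov g) {A : Set X} (hA : MeasurableSet A)
    {t : ℕ} (ht : 1 ≤ t) (hsmall : ∀ y, 1 - hitLE g A t y ≤ 1/10) (x : X) :
    expHit g A x ≤ 2 * t := by
  set c := ⨆ y, 1 - hitLE g A t y with hcdef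
  have hc : c ≤ 1/10 := iSup_le hsmall
  set S := ∑' j : Fin (t+1), (1 - hitLE g A (j:ℕ) x) with hSdef
  have hS : S ≤ (t:ℝ≥0∞) + 1/10 := by
    rw [hSdef, tsum_fintype,
      Fin.sum_univ_eq_sum_range (fun j => 1 - hitLE g A j x) (t+1), Finset.sum_range_succ]
    have h1 : ∑ j ∈ Finset.range t, (1 - hitLE g A j x) ≤ t := by
      calc ∑ j ∈ Finset.range t, (1 - hitLE g A j x) ≤ ∑ _j ∈ Finset.range t, 1 :=
        Finset.sum_le_sum (fun j _ => tsub_le_self)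
      _ = t := by simp
    exact add_le_add h1 (le_trans (le_iSup (fun y => 1 - hitLE g A t y) x) hc)
  have hinv : (1 - c)⁻¹ ≤ (9/10 : ℝ≥0∞)⁻¹ := by
    apply ENNReal.inv_le_inv'
    calc (9/10:ℝ≥0∞) = 1 - 1/10 := nn2.symm
    _ ≤ 1 - c := tsub_le_tsub_left hc 1
  have key : expHit g A x = ∑' p : ℕ × Fin (t+1),
      (1 - hitLE g A (p.1 * (t+1) + (p.2:ℕ)) x) := by
    rw [expHit, ← Equiv.tsum_eq (Nat.divModEquiv (t+1)).symm
      (fun s => 1 - hitLE g A s x)]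
    rfl
  calc expHit g A x
      = ∑' k : ℕ, ∑' j : Fin (t+1), (1 - hitLE g A (k * (t+1) + (j:ℕ)) x) := by
        rw [key]
        exact ENNReal.tsum_prod (f := fun k (j : Fin (t+1)) => 1 - hitLE g A (k * (t+1) + (j:ℕ)) x)
    _ ≤ ∑' k : ℕ, ∑' j : Fin (t+1), c ^ k * (1 - hitLE g A (j:ℕ) x) :=
        ENNReal.tsum_le_tsum (fun k => ENNReal.tsum_le_tsum
          (fun j => surv_geom hg hA t k j x))
    _ = (∑' k : ℕ, c ^ k) * S := by
        rw [← ENNReal.tsum_mul_right]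
        congr 1
        funext k
        rw [ENNReal.tsum_mul_left]
    _ = (1 - c)⁻¹ * S := by rw [ENNReal.tsum_geometric]
    _ ≤ (9/10 : ℝ≥0∞)⁻¹ * ((t:ℝ≥0∞) + 1/10) := mul_le_mul' hinv hS
    _ ≤ (9/10 : ℝ≥0∞)⁻¹ * ((11/10) * t) := by
        refine mul_le_mul' le_rfl ?_
        calc (t:ℝ≥0∞) + 1/10 ≤ (t:ℝ≥0∞) + (1/10) * t :=
          add_le_add le_rfl (le_mul_of_one_le_right (zero_le) (by exact_mod_cast ht))
        _ = (11/10) * t := by rw [← nn4]; ring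
    _ = ((9/10 : ℝ≥0∞)⁻¹ * (11/10)) * t := by ring
    _ ≤ 2 * t := mul_le_mul_left nn3 _

end Aux

/-- equivalence of the maximum hitting time and the large hitting time. -/
theorem stmt1 {X : Type*} [MetricSpace X] [MeasurableSpace X] [BorelSpace X]
    (g : X → Measure X) (π : Measure X) (hg : IsMarkov g)
    (hπ : IsProbabilityMeasure π) (hstat : Stationary g π) (α : ℝ) (hα : 0 < α) :
    (1 / 10 : ℝ≥0∞) * largeHit g π α ≤ maxHit g π α ∧
      maxHit g π α ≤ 2 * largeHit g π α ∧
      (largeHit g π α = ⊤ ↔ maxHit g π α = ⊤) := by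
  classical
  -- per-t bound for part 2
  have P2 : ∀ t : ℕ, ((9/10 : ℝ≥0∞) < ⨅ (x : X) (A : Set X) (_ : MeasurableSet A)
      (_ : ENNReal.ofReal α ≤ π A), hitLE g A t x) → maxHit g π α ≤ 2 * t := by
    intro t hyp
    refine iSup_le fun x => iSup_le fun A => iSup_le fun hA => iSup_le fun hπA => ?_
    have hall : ∀ y, (9/10 : ℝ≥0∞) < hitLE g A t y := by
      intro y
      refine lt_of_lt_of_le hyp ?_
      exact iInf_le_of_le y (iInf_le_of_le A (iInf_le_of_le hA (iInf_le _ hπA)))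
    have hsmall : ∀ y, 1 - hitLE g A t y ≤ 1/10 := by
      intro y
      rw [tsub_le_iff_right]
      calc (1:ℝ≥0∞) = 9/10 + 1/10 := nn1.symm
      _ = 1/10 + 9/10 := by ring
      _ ≤ 1/10 + hitLE g A t y := add_le_add le_rfl (hall y).le
    rcases Nat.eq_zero_or_pos t with ht0 | ht1
    · subst ht0
      have h0 : (1:ℝ≥0∞) ≤ hitLE g A 0 x := by
        have := hall x
        rw [hitLE_zero] at this ⊢
        by_cases hx : x ∈ A
        · rw [Set.indicator_of_mem hx]
        · rw [Set.indicator_of_notMem hx] at this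
          exact absurd this (by simp)
      have hE : expHit g A x = 0 := by
        rw [expHit]
        refine ENNReal.tsum_eq_zero.mpr fun s => ?_
        refine tsub_eq_zero_of_le (le_trans h0 (hitLE_mono x (Nat.zero_le s)))
      rw [hE]
      exact zero_le
    · exact expHit_le hg hA ht1 hsmall x
  -- the two main inequalities
  have part1 : (1 / 10 : ℝ≥0∞) * largeHit g π α ≤ maxHit g π α := by
    by_cases hMtop : maxHit g π α = ⊤
    · rw [hMtop]; exact le_top
    · set m := (maxHit g π α).toReal with hm
      have hm0 : (0:ℝ) ≤ 10 * m := by positivity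
      set t := ⌊10 * m⌋₊ with htdef
      have hM' : maxHit g π α = ENNReal.ofReal m := (ENNReal.ofReal_toReal hMtop).symm
      have hd : maxHit g π α / ((t:ℝ≥0∞)+1) < 1/10 := by
        have h1 : 10 * m < (t:ℝ) + 1 := Nat.lt_floor_add_one (10*m)
        rw [hM', ENNReal.div_lt_iff (Or.inl (zero_lt_one.trans_le le_add_self).ne')
          (Or.inl (by finiteness))]
        calc ENNReal.ofReal m < ENNReal.ofReal (((t:ℝ)+1)/10) := by
              rw [ENNReal.ofReal_lt_ofReal_iff (by positivity)]
              linarith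
          _ = 1/10 * ((t:ℝ≥0∞)+1) := by
              rw [ENNReal.ofReal_div_of_pos (by norm_num),
                ENNReal.ofReal_add (by positivity) zero_le_one, ENNReal.ofReal_natCast,
                ENNReal.ofReal_one, ENNReal.ofReal_ofNat, one_div, ENNReal.div_eq_inv_mul]
      have hqual : (9/10 : ℝ≥0∞) < ⨅ (x : X) (A : Set X) (_ : MeasurableSet A)
          (_ : ENNReal.ofReal α ≤ π A), hitLE g A t x := by
        have hb : (9/10 : ℝ≥0∞) < 1 - maxHit g π α / ((t:ℝ≥0∞)+1) := by
          apply lt_tsub_iff_right.mpr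
          calc (9/10 : ℝ≥0∞) + maxHit g π α / ((t:ℝ≥0∞)+1) < 9/10 + 1/10 :=
            ENNReal.add_lt_add_left (by simp [ENNReal.div_eq_top]) hd
          _ = 1 := nn1
        refine lt_of_lt_of_le hb ?_
        refine le_iInf fun x => le_iInf fun A => le_iInf fun hA => le_iInf fun hπA => ?_
        have hE : expHit g A x ≤ maxHit g π α :=
          le_iSup_of_le x (le_iSup_of_le A (le_iSup_of_le hA (le_iSup_of_le hπA le_rfl)))
        have h1 : ((t:ℝ≥0∞)+1) * (1 - hitLE g A t x) ≤ maxHit g π α :=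
          (exp_ge t x).trans hE
        have h2 : 1 - hitLE g A t x ≤ maxHit g π α / ((t:ℝ≥0∞)+1) :=
          (ENNReal.le_div_iff_mul_le (Or.inl (zero_lt_one.trans_le le_add_self).ne')
            (Or.inl (by finiteness))).mpr
            (by rwa [mul_comm])
        rw [tsub_le_iff_right]
        calc (1:ℝ≥0∞) ≤ maxHit g π α / ((t:ℝ≥0∞)+1) + hitLE g A t x :=
            tsub_le_iff_right.mp h2
          _ = hitLE g A t x + maxHit g π α / ((t:ℝ≥0∞)+1) := by ring
      have hLt : largeHit g π α ≤ (t:ℝ≥0∞) := iInf₂_le t hqual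
      have htM : (t:ℝ≥0∞) ≤ 10 * maxHit g π α := by
        have h1 : (t:ℝ) ≤ 10 * m := Nat.floor_le hm0
        calc (t:ℝ≥0∞) = ENNReal.ofReal (t:ℝ) := (ENNReal.ofReal_natCast t).symm
          _ ≤ ENNReal.ofReal (10 * m) := ENNReal.ofReal_le_ofReal h1
          _ = ENNReal.ofReal 10 * ENNReal.ofReal m := ENNReal.ofReal_mul (by norm_num)
          _ = 10 * maxHit g π α := by rw [← hM', ENNReal.ofReal_ofNat]
      calc (1/10 : ℝ≥0∞) * largeHit g π α ≤ (1/10) * (10 * maxHit g π α) :=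
            mul_le_mul' le_rfl (hLt.trans htM)
        _ = ((1/10 : ℝ≥0∞) * 10) * maxHit g π α := by ring
        _ = maxHit g π α := by
            rw [one_div, ENNReal.inv_mul_cancel (by norm_num) (by norm_num), one_mul]
  have part2 : maxHit g π α ≤ 2 * largeHit g π α := by
    by_cases hLtop : largeHit g π α = ⊤
    · rw [hLtop, ENNReal.mul_top (by norm_num)]
      exact le_top
    · have hne : ∃ t : ℕ, (9/10 : ℝ≥0∞) < ⨅ (x : X) (A : Set X) (_ : MeasurableSet A)
          (_ : ENNReal.ofReal α ≤ π A), hitLE g A t x := by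
        by_contra hno
        push_neg at hno
        exact hLtop (by
          rw [largeHit]
          exact iInf_eq_top.mpr fun t => iInf_eq_top.mpr fun hPt => absurd hPt (hno t).not_gt)
      set t0 := Nat.find hne with ht0
      have hP := Nat.find_spec hne
      have hLe : (t0:ℝ≥0∞) ≤ largeHit g π α := by
        refine le_iInf fun t => le_iInf fun hPt => ?_
        exact_mod_cast Nat.cast_le.mpr (Nat.find_min' hne hPt)
      calc maxHit g π α ≤ 2 * t0 := P2 t0 hP
        _ ≤ 2 * largeHit g π α := mul_le_mul' le_rfl hLe
  refine ⟨part1, part2, ?_, ?_⟩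
  · intro hLt
    rw [hLt, ENNReal.mul_top (by norm_num)] at part1
    exact top_le_iff.mp part1
  · intro hMt
    rw [hMt] at part2
    have h2 := top_le_iff.mp part2
    rcases ENNReal.mul_eq_top.mp h2 with ⟨_, hL⟩ | ⟨h2t, _⟩
    · exact hL
    · exact absurd h2t (by norm_num)
end MixHit
end
end

section
/- Let g be a discrete-time Markov transition kernel on a σ-compact metric state space X with stationary distribution π that satisfies the strong Feller property, and let S be a Borel set with π(S) > 0. Then the trace kernel g^{(S)} of g on S also satisfies the strong Feller property. (Indeed, ‖g^{(S)}(x,1,·) − g^{(S)}(y,1,·)‖ ≤ ‖g(x,1,·) − g(y,1,·)‖ for all x,y ∈ S.) -/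
open MeasureTheory ENNReal

noncomputable section

namespace MixHit

variable {X : Type*} [MeasurableSpace X]

section Aux

lemma tv_symm (μ ν : Measure X) : tv μ ν = tv ν μ := by
  unfold tv
  congr 1; ext A; congr 1; ext hA; exact sup_comm _ _

lemma sub_le_tv {μ ν : Measure X} {A : Set X} (hA : MeasurableSet A) :
    μ A - ν A ≤ tv μ ν :=
  le_iSup_of_le A (le_iSup_of_le hA le_sup_left)

lemma measure_le_add_tv {μ ν : Measure X} {A : Set X} (hA : MeasurableSet A) :
    μ A ≤ ν A + tv μ ν := by
  calc μ A ≤ ν A + (μ A - ν A) := le_add_tsub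
    _ ≤ ν A + tv μ ν := add_le_add le_rfl (sub_le_tv hA)

lemma lintegral_le_lintegral_add_tv {μ ν : Measure X}
    {h : X → ℝ≥0∞} (hm : Measurable h) (hb : ∀ y, h y ≤ 1) :
    ∫⁻ y, h y ∂μ ≤ (∫⁻ y, h y ∂ν) + tv μ ν := by
  set f : X → ℝ := fun y => (h y).toReal with hf
  have hfm : Measurable f := hm.ennreal_toReal
  have hfnn : ∀ y, 0 ≤ f y := fun y => ENNReal.toReal_nonneg
  have hof : ∀ y, ENNReal.ofReal (f y) = h y := fun y =>
    ENNReal.ofReal_toReal ((hb y).trans_lt ENNReal.one_lt_top).ne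
  have hf1 : ∀ y, f y ≤ 1 := fun y => by
    rw [hf]
    exact ENNReal.toReal_le_of_le_ofReal zero_le_one (by simpa using hb y)
  have hAm : ∀ t : ℝ, MeasurableSet {a | t ≤ f a} := fun t => hfm measurableSet_Ici
  have key : ∀ κ : Measure X, ∫⁻ y, h y ∂κ = ∫⁻ t in Set.Ioi (0:ℝ), κ {a | t ≤ f a} := by
    intro κ
    rw [← lintegral_eq_lintegral_meas_le κ (Filter.Eventually.of_forall hfnn) hfm.aemeasurable]
    exact lintegral_congr fun y => (hof y).symm
  have hsplit : ∀ κ : Measure X,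
      ∫⁻ t in Set.Ioi (0:ℝ), κ {a | t ≤ f a} =
        (∫⁻ t in Set.Ioc (0:ℝ) 1, κ {a | t ≤ f a}) +
          ∫⁻ t in Set.Ioi (1:ℝ), κ {a | t ≤ f a} := by
    intro κ
    rw [← lintegral_union measurableSet_Ioi (Set.Ioc_disjoint_Ioi le_rfl),
      Set.Ioc_union_Ioi_eq_Ioi zero_le_one]
  have hzero : ∫⁻ t in Set.Ioi (1:ℝ), μ {a | t ≤ f a} = 0 := by
    have hfun : ∀ t ∈ Set.Ioi (1:ℝ), μ {a | t ≤ f a} = (fun _ : ℝ => (0:ℝ≥0∞)) t := by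
      intro t ht
      have he : {a | t ≤ f a} = ∅ := by
        ext a
        simp only [Set.mem_setOf_eq, Set.mem_empty_iff_false, iff_false, not_le]
        exact lt_of_le_of_lt (hf1 a) ht
      simp [he]
    rw [setLIntegral_congr_fun measurableSet_Ioi hfun,
      lintegral_zero]
  calc ∫⁻ y, h y ∂μ = ∫⁻ t in Set.Ioc (0:ℝ) 1, μ {a | t ≤ f a} := by
        rw [key μ, hsplit μ, hzero, add_zero]
    _ ≤ ∫⁻ t in Set.Ioc (0:ℝ) 1, (ν {a | t ≤ f a} + tv μ ν) :=
        lintegral_mono fun t => measure_le_add_tv (hAm t)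
    _ = (∫⁻ t in Set.Ioc (0:ℝ) 1, ν {a | t ≤ f a}) + tv μ ν * volume (Set.Ioc (0:ℝ) 1) := by
        rw [lintegral_add_right _ measurable_const, setLIntegral_const]
    _ ≤ (∫⁻ t in Set.Ioi (0:ℝ), ν {a | t ≤ f a}) + tv μ ν := by
        refine add_le_add (lintegral_mono_set Set.Ioc_subset_Ioi_self) ?_
        rw [Real.volume_Ioc]
        simp
    _ = (∫⁻ y, h y ∂ν) + tv μ ν := by rw [← key ν]

variable {g : X → Measure X} {S : Set X}

lemma measurable_enterDist (hg : IsMarkov g) (hS : MeasurableSet S) :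
    ∀ t, Measurable (enterDist g S t) := by
  intro t
  induction t with
  | zero =>
    apply Measure.measurable_of_measurable_coe
    intro A hA
    simp only [enterDist, Measure.restrict_apply hA]
    exact (Measure.measurable_coe (hA.inter hS)).comp Measure.measurable_dirac
  | succ n ih =>
    apply Measure.measurable_of_measurable_coe
    intro A hA
    have heq : ∀ x, (Sᶜ.indicator (fun x' => (g x').bind (enterDist g S n)) x) A
        = Sᶜ.indicator (fun x' => (g x').bind (enterDist g S n) A) x := by
      intro x
      by_cases hx : x ∈ Sᶜ <;> simp [hx]
    simp only [enterDist, heq]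
    apply Measurable.indicator _ hS.compl
    have hb : ∀ x', (g x').bind (enterDist g S n) A = ∫⁻ z, enterDist g S n z A ∂(g x') :=
      fun x' => Measure.bind_apply hA ih.aemeasurable
    simp only [hb]
    exact (Measure.measurable_lintegral ((Measure.measurable_coe hA).comp ih)).comp
      (Measure.measurable_of_measurable_coe _ hg.2)

lemma measurable_enterDist_apply (hg : IsMarkov g) (hS : MeasurableSet S) (t : ℕ)
    {A : Set X} (hA : MeasurableSet A) :
    Measurable fun z => enterDist g S t z A :=
  (Measure.measurable_coe hA).comp (measurable_enterDist hg hS t)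

lemma enterDist_zero_univ (x : X) : enterDist g S 0 x Set.univ = Measure.dirac x S := by
  simp [enterDist, Measure.restrict_apply MeasurableSet.univ]

lemma measurable_hitMeasure (hg : IsMarkov g) (hS : MeasurableSet S) :
    Measurable (hitMeasure g S) := by
  apply Measure.measurable_of_measurable_coe
  intro A hA
  simp only [hitMeasure, Measure.sum_apply _ hA]
  exact Measurable.ennreal_tsum fun t =>
    (Measure.measurable_coe hA).comp (measurable_enterDist hg hS t)

lemma sum_enterDist_univ_le (hg : IsMarkov g) (hS : MeasurableSet S) :
    ∀ n x, ∑ t ∈ Finset.range (n + 1), enterDist g S t x Set.univ ≤ 1 := by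
  intro n
  induction n with
  | zero =>
    intro x
    rw [Finset.range_one, Finset.sum_singleton, enterDist_zero_univ]
    exact prob_le_one
  | succ n ih =>
    intro x
    by_cases hx : x ∈ S
    · have hz : ∀ t, enterDist g S (t + 1) x Set.univ = 0 := by
        intro t
        simp [enterDist, Set.indicator_of_notMem (show x ∉ Sᶜ by simpa using hx)]
      rw [Finset.sum_range_succ']
      simp only [hz, Finset.sum_const_zero, zero_add]
      rw [enterDist_zero_univ]
      exact prob_le_one
    · have h0 : enterDist g S 0 x Set.univ = 0 := by
        simp only [enterDist, Measure.restrict_apply MeasurableSet.univ, Set.univ_inter,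
          Measure.dirac_apply' _ hS]
        simp [Set.indicator_of_notMem hx]
      have hstep : ∀ t, enterDist g S (t + 1) x Set.univ
          = ∫⁻ z, enterDist g S t z Set.univ ∂(g x) := by
        intro t
        simp only [enterDist, Set.indicator_of_mem (show x ∈ Sᶜ from hx)]
        exact Measure.bind_apply MeasurableSet.univ (measurable_enterDist hg hS t).aemeasurable
      rw [Finset.sum_range_succ']
      simp only [hstep, h0, add_zero]
      rw [← lintegral_finset_sum _ (fun t _ =>
        measurable_enterDist_apply hg hS t MeasurableSet.univ)]
      calc ∫⁻ z, (∑ t ∈ Finset.range (n + 1), enterDist g S t z Set.univ) ∂(g x)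
          ≤ ∫⁻ _, 1 ∂(g x) := lintegral_mono fun z => ih z
        _ = 1 := by
            have := hg.1 x
            simp
    
lemma hitMeasure_le_one (hg : IsMarkov g) (hS : MeasurableSet S) (x : X) (A : Set X) :
    hitMeasure g S x A ≤ 1 := by
  have h1 : hitMeasure g S x A ≤ hitMeasure g S x Set.univ :=
    measure_mono (Set.subset_univ A)
  have h2 : hitMeasure g S x Set.univ = ∑' t, enterDist g S t x Set.univ := by
    simp [hitMeasure, Measure.sum_apply _ MeasurableSet.univ]
  refine h1.trans ?_
  rw [h2]
  refine Summable.tsum_le_of_sum_range_le ENNReal.summable fun n => ?_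
  cases n with
  | zero => simp
  | succ n => exact sum_enterDist_univ_le hg hS n x

lemma traceK_tv_le (hg : IsMarkov g) (hS : MeasurableSet S) (x y : X) :
    tv (traceK g S x) (traceK g S y) ≤ tv (g x) (g y) := by
  have hmeas := measurable_hitMeasure hg hS
  have happ : ∀ z (A : Set X), MeasurableSet A →
      traceK g S z A = ∫⁻ w, hitMeasure g S w A ∂(g z) :=
    fun z A hA => Measure.bind_apply hA hmeas.aemeasurable
  refine iSup_le fun A => iSup_le fun hA => ?_
  have hm : Measurable fun w => hitMeasure g S w A := (Measure.measurable_coe hA).comp hmeas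
  have hb : ∀ w, hitMeasure g S w A ≤ 1 := fun w => hitMeasure_le_one hg hS w A
  have h1 : traceK g S x A - traceK g S y A ≤ tv (g x) (g y) := by
    rw [tsub_le_iff_right, happ x A hA, happ y A hA, add_comm]
    exact lintegral_le_lintegral_add_tv hm hb
  have h2 : traceK g S y A - traceK g S x A ≤ tv (g x) (g y) := by
    rw [tsub_le_iff_right, happ x A hA, happ y A hA, add_comm, tv_symm]
    exact lintegral_le_lintegral_add_tv hm hb
  exact sup_le h1 h2

lemma tv_comap_le (hS : MeasurableSet S) (μ ν : Measure X) :
    tv (μ.comap (Subtype.val : S → X)) (ν.comap (Subtype.val : S → X)) ≤ tv μ ν := by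
  have he : MeasurableEmbedding (Subtype.val : S → X) := MeasurableEmbedding.subtype_coe hS
  refine iSup_le fun A => iSup_le fun hA => ?_
  rw [he.comap_apply, he.comap_apply]
  exact le_iSup_of_le (Subtype.val '' A)
    (le_iSup_of_le (he.measurableSet_image.mpr hA) le_rfl)

end Aux

/-- the trace of a strong Feller chain is strong Feller; indeed the
trace kernel is a contraction in total variation. -/
theorem stmt5 {X : Type*} [MetricSpace X] [MeasurableSpace X] [BorelSpace X]
    [SigmaCompactSpace X] (g : X → Measure X) (π : Measure X)
    (hg : IsMarkov g) (hπ : IsProbabilityMeasure π) (hstat : Stationary g π)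
    (hSF : StrongFeller g) (S : Set X) (hS : MeasurableSet S) (hpos : 0 < π S) :
    StrongFeller (traceSub g S) ∧
      ∀ x y : X, x ∈ S → y ∈ S →
        tv (traceK g S x) (traceK g S y) ≤ tv (g x) (g y) := by
  constructor
  · intro x ε hε
    obtain ⟨δ, hδ, hδ2⟩ := hSF (x : X) ε hε
    refine ⟨δ, hδ, fun y hy => ?_⟩
    have hle : tv (traceSub g S x) (traceSub g S y) ≤ tv (g (x : X)) (g (y : X)) :=
      le_trans (tv_comap_le hS _ _) (traceK_tv_le hg hS _ _)
    refine lt_of_le_of_lt hle (hδ2 (y : X) ?_)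
    rwa [← Subtype.dist_eq]
  · exact fun x y _ _ => traceK_tv_le hg hS x y

end MixHit
end
end
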